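/- Let ε ∈ (0, 1), let N be a positive integer with N ≤ 1/(32ε²), and let x_1 < x_2 < ... < x_N be real numbers in the open interval (0, 1/ε). Then there exists a function f : ℝ → ℝ that is continuously differentiable with 1-Lipschitz derivative f', satisfies f(0) = 1 and inf f ≥ 0 (so f(0) - inf f ≤ 1), and satisfies f'(x_i) = -ε for every i ∈ {1, ..., N}. In particular, none of the query points x_1, ..., x_N is an ε-stationary point of f. -/

import Mathlib

open Metric MeasureTheory Set

theorem resisting_oracle_construction (ε : ℝ) (hε : ε ∈ Set.Ioo (0 : ℝ) 1)
    (N : ℕ) (hN : 1 ≤ N) (hN2 : (N : ℝ) ≤ 1 / (32 * ε ^ 2))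
    (x : Fin N → ℝ) (hmono : StrictMono x)
    (hx : ∀ i, x i ∈ Set.Ioo (0 : ℝ) (1 / ε)) :
    ∃ f : ℝ → ℝ, ContDiff ℝ 1 f ∧ LipschitzWith 1 (deriv f) ∧
      f 0 = 1 ∧ (∀ y, 0 ≤ f y) ∧ (∀ i, deriv f (x i) = -ε) ∧
      (∀ i, ¬ |deriv f (x i)| < ε) := by
  obtain ⟨hε0, hε1⟩ := hε
  set S : Set ℝ := Set.range x with hS
  have hSne : S.Nonempty := ⟨x ⟨0, hN⟩, Set.mem_range_self _⟩
  set g : ℝ → ℝ := fun y => -(max (ε - infDist y S) 0) with hg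
  have hglip : LipschitzWith 1 g := by
    have h1 : LipschitzWith 1 (fun y => ε - infDist y S) := by
      simpa using (LipschitzWith.const (α := ℝ) ε).sub (Metric.lipschitz_infDist_pt S)
    have h2 : LipschitzWith 1 (fun y => max (ε - infDist y S) 0) := by
      simpa [max_comm] using h1.const_max 0
    exact h2.neg
  have hgcont : Continuous g := hglip.continuous
  have hgle0 : ∀ y, g y ≤ 0 := fun y => neg_nonpos.2 (le_max_right _ _)
  have hgge : ∀ y, -ε ≤ g y := by
    intro y
    have : max (ε - infDist y S) 0 ≤ ε := by
      apply max_le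
      · have := Metric.infDist_nonneg (x := y) (s := S); linarith
      · linarith
    simpa [hg] using neg_le_neg this
  set f : ℝ → ℝ := fun y => 1 + ∫ t in (0:ℝ)..y, g t with hf
  have hderiv : ∀ y, deriv f y = g y := by
    intro y
    rw [hf]
    rw [deriv_const_add]
    exact Continuous.deriv_integral g hgcont 0 y
  have hdiff : Differentiable ℝ f := by
    intro y
    have : DifferentiableAt ℝ (fun u => ∫ t in (0:ℝ)..u, g t) y := by
      exact (intervalIntegral.integral_hasDerivAt_right
        (hgcont.intervalIntegrable (μ := volume) 0 y)
        (hgcont.stronglyMeasurableAtFilter _ _)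
        hgcont.continuousAt).differentiableAt
    exact (differentiableAt_const (1:ℝ)).add this
  -- indicator sum bound
  set hfun : ℝ → ℝ := fun t => ∑ i : Fin N, Set.indicator (Set.Icc (x i - ε) (x i + ε)) (fun _ => ε) t with hhfun
  have hind_int : ∀ i : Fin N, Integrable (Set.indicator (Set.Icc (x i - ε) (x i + ε)) (fun _ => ε)) (volume : Measure ℝ) := by
    intro i
    rw [MeasureTheory.integrable_indicator_iff measurableSet_Icc]
    exact integrableOn_const (by simp [Real.volume_Icc])
  have hh_int : Integrable hfun (volume : Measure ℝ) :=
    MeasureTheory.integrable_finset_sum _ (fun i _ => hind_int i)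
  have hh_nonneg : ∀ t, 0 ≤ hfun t := by
    intro t
    apply Finset.sum_nonneg
    intro i _
    exact Set.indicator_nonneg (fun _ _ => le_of_lt hε0) t
  have hgh : ∀ t, -hfun t ≤ g t := by
    intro t
    by_cases hd : infDist t S < ε
    · obtain ⟨z, hz, hdz⟩ := (Metric.infDist_lt_iff hSne).1 hd
      obtain ⟨i, rfl⟩ := hz
      have hmem : t ∈ Set.Icc (x i - ε) (x i + ε) := by
        rw [Real.dist_eq] at hdz
        constructor <;> [linarith [abs_lt.1 hdz]; linarith [abs_lt.1 hdz]]
      have : ε ≤ hfun t := by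
        rw [hhfun]
        have := Finset.single_le_sum
          (f := fun j : Fin N => Set.indicator (Set.Icc (x j - ε) (x j + ε)) (fun _ => ε) t)
          (fun j _ => Set.indicator_nonneg (fun _ _ => le_of_lt hε0) t)
          (Finset.mem_univ i)
        simpa [Set.indicator_of_mem hmem] using this
      have := hgge t
      linarith
    · push_neg at hd
      have : g t = 0 := by
        rw [hg]
        simp only [neg_eq_zero]
        exact max_eq_right (by linarith)
      rw [this]
      simpa using neg_nonpos.2 (hh_nonneg t)
  have hh_total : ∫ t, hfun t ≤ 2 * N * ε ^ 2 := by
    rw [hhfun, MeasureTheory.integral_finset_sum _ (fun i _ => hind_int i)]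
    have : ∀ i : Fin N, ∫ t, Set.indicator (Set.Icc (x i - ε) (x i + ε)) (fun _ => ε) t = 2 * ε ^ 2 := by
      intro i
      rw [MeasureTheory.integral_indicator_const ε measurableSet_Icc]
      rw [measureReal_def, Real.volume_Icc]
      rw [ENNReal.toReal_ofReal (by linarith)]
      simp [smul_eq_mul]
      ring_nf
    rw [Finset.sum_congr rfl (fun i _ => this i)]
    simp [Finset.sum_const]
    ring_nf
    nlinarith
  have hbound : 2 * (N:ℝ) * ε ^ 2 ≤ 1 := by
    have hε2 : (0:ℝ) < 32 * ε ^ 2 := by positivity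
    have hinv : (32 * ε ^ 2) * (32 * ε ^ 2)⁻¹ = 1 := mul_inv_cancel₀ (ne_of_gt hε2)
    rw [div_eq_inv_mul] at hN2
    nlinarith [mul_le_mul_of_nonneg_left hN2 (by positivity : (0:ℝ) ≤ 2 * ε ^ 2), hinv]
  have hfnonneg : ∀ y, 0 ≤ f y := by
    intro y
    rcases le_or_gt y 0 with hy | hy
    · have : ∫ t in y..(0:ℝ), g t ≤ 0 := by
        rw [intervalIntegral.integral_of_le hy]
        exact MeasureTheory.integral_nonpos hgle0
      have heq : ∫ t in (0:ℝ)..y, g t = -∫ t in y..(0:ℝ), g t :=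
        (intervalIntegral.integral_symm y 0)
      rw [hf]; simp only; rw [heq]; linarith
    · have hint1 : IntervalIntegrable (fun t => -hfun t) volume 0 y :=
        (hh_int.intervalIntegrable).neg
      have hint2 : IntervalIntegrable g volume 0 y := hgcont.intervalIntegrable 0 y
      have h1 : ∫ t in (0:ℝ)..y, (-hfun t) ≤ ∫ t in (0:ℝ)..y, g t :=
        intervalIntegral.integral_mono_on (le_of_lt hy) hint1 hint2 (fun t _ => hgh t)
      have h2 : ∫ t in (0:ℝ)..y, (-hfun t) = -∫ t in (0:ℝ)..y, hfun t :=
        intervalIntegral.integral_neg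
      have h3 : ∫ t in (0:ℝ)..y, hfun t ≤ ∫ t, hfun t := by
        rw [intervalIntegral.integral_of_le (le_of_lt hy)]
        exact MeasureTheory.setIntegral_le_integral hh_int
          (Filter.Eventually.of_forall hh_nonneg)
      rw [hf]
      have : -(1:ℝ) ≤ ∫ t in (0:ℝ)..y, g t := by
        have : -∫ t, hfun t ≤ ∫ t in (0:ℝ)..y, g t := by
          calc -∫ t, hfun t ≤ -∫ t in (0:ℝ)..y, hfun t := by linarith
            _ = ∫ t in (0:ℝ)..y, (-hfun t) := h2.symm
            _ ≤ _ := h1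
        linarith [hh_total, hbound]
      simp only
      linarith
  refine ⟨f, ?_, ?_, ?_, hfnonneg, ?_, ?_⟩
  · rw [contDiff_one_iff_deriv]
    exact ⟨hdiff, by rw [funext hderiv]; exact hgcont⟩
  · rw [funext hderiv]; exact hglip
  · rw [hf]; simp
  · intro i
    rw [hderiv, hg]
    have : infDist (x i) S = 0 := Metric.infDist_zero_of_mem (Set.mem_range_self i)
    simp [this, max_eq_left (le_of_lt hε0)]
  · intro i
    rw [hderiv, hg]
    have : infDist (x i) S = 0 := Metric.infDist_zero_of_mem (Set.mem_range_self i)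
    simp [this, max_eq_left (le_of_lt hε0), abs_of_pos hε0]
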